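/- Suppose (X_n) is strictly stationary and regularly varying with index α ∈ (0,2), n·P(|X_1|>a_n)→1, the large deviation condition (LD) holds for some (r_n) with r_n→∞ and r_n/n→0, k_n = ⌊n/r_n⌋ = o(n^t) for some 0 < t < 1, and (l_n) is a sequence of positive integers with l_n/n^q → 1 where q = (1/2)·min{ 1/α, (1−t)/(1+α) } (so l_n < r_n for large n). Then for every function f of class C_K^+, k_n · E| exp( − f(a_n^{−1} S_{r_n}) ) − exp( − f(a_n^{−1} S_{r_n − l_n}) ) | → 0 as n → ∞. -/

import Mathlib

open MeasureTheory Filter Set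
noncomputable section

def SlowlyVaryingAt (L : ℝ → ℝ) : Prop :=
  ∀ c : ℝ, 0 < c → Tendsto (fun x => L (c * x) / L x) atTop (nhds 1)

def RegVarOf {Ω : Type*} [MeasurableSpace Ω] (P : Measure Ω) (Y : Ω → ℝ) (α : ℝ) : Prop :=
  ∃ L : ℝ → ℝ, Measurable L ∧ (∀ x : ℝ, 0 < x → 0 < L x) ∧ SlowlyVaryingAt L ∧
    ∀ x : ℝ, 0 < x → (P {ω | x < |Y ω|}).toReal = x ^ (-α) * L x

def IsStationarySeq {Ω : Type*} [MeasurableSpace Ω] (P : Measure Ω) (X : ℕ → Ω → ℝ) : Prop :=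
  ∀ m : ℕ, Measure.map (fun ω => fun i : ℕ => X (i + m) ω) P
    = Measure.map (fun ω => fun i : ℕ => X i ω) P

def pS {Ω : Type*} (X : ℕ → Ω → ℝ) (m : ℕ) (ω : Ω) : ℝ := ∑ i ∈ Finset.range m, X i ω

def blockS {Ω : Type*} (X : ℕ → Ω → ℝ) (r k : ℕ) (ω : Ω) : ℝ :=
  ∑ i ∈ Finset.range r, X ((k - 1) * r + i) ω

def truncBlock {Ω : Type*} (X : ℕ → Ω → ℝ) (a : ℝ) (r : ℕ) (u : ℝ) (k : ℕ) (ω : Ω) : ℝ :=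
  if |blockS X r k ω| / a ≤ u then blockS X r k ω / a else 0

def nuDens (α cp cm : ℝ) (x : ℝ) : ℝ :=
  if 0 < x then cp * α * x ^ (-α - 1)
  else if x < 0 then cm * α * (-x) ^ (-α - 1) else 0

def nuMeasure (α cp cm : ℝ) : Measure ℝ :=
  MeasureTheory.volume.withDensity (fun x => ENNReal.ofReal (nuDens α cp cm x))

def pastSigma {Ω : Type*} (X : ℕ → Ω → ℝ) (j : ℕ) : MeasurableSpace Ω :=
  ⨆ i ∈ Set.Iic j, MeasurableSpace.comap (X i) inferInstance

def futureSigma {Ω : Type*} (X : ℕ → Ω → ℝ) (j : ℕ) : MeasurableSpace Ω :=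
  ⨆ i ∈ Set.Ici j, MeasurableSpace.comap (X i) inferInstance

def alphaDep {Ω : Type*} [MeasurableSpace Ω] (P : Measure Ω) (mA mB : MeasurableSpace Ω) : ℝ :=
  sSup {d : ℝ | ∃ A B : Set Ω, MeasurableSet[mA] A ∧ MeasurableSet[mB] B ∧
    d = |(P (A ∩ B)).toReal - (P A).toReal * (P B).toReal|}

def alphaMix {Ω : Type*} [MeasurableSpace Ω] (P : Measure Ω) (X : ℕ → Ω → ℝ) (m : ℕ) : ℝ :=
  ⨆ j : ℕ, alphaDep P (pastSigma X j) (futureSigma X (j + m))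

def rhoDep {Ω : Type*} [MeasurableSpace Ω] (P : Measure Ω) (mA mB : MeasurableSpace Ω) : ℝ :=
  sSup {d : ℝ | ∃ f g : Ω → ℝ, Measurable[mA] f ∧ Measurable[mB] g ∧
    MemLp f 2 P ∧ MemLp g 2 P ∧
    d = |(∫ ω, f ω * g ω ∂P) - (∫ ω, f ω ∂P) * (∫ ω, g ω ∂P)| /
      Real.sqrt ((∫ ω, (f ω) ^ 2 ∂P) * (∫ ω, (g ω) ^ 2 ∂P))}

def rhoMix {Ω : Type*} [MeasurableSpace Ω] (P : Measure Ω) (X : ℕ → Ω → ℝ) (m : ℕ) : ℝ :=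
  ⨆ j : ℕ, rhoDep P (pastSigma X j) (futureSigma X (j + m))

def CKplus (f : ℝ → ℝ) : Prop :=
  Continuous f ∧ (∀ x, 0 ≤ f x) ∧ (∃ M : ℝ, ∀ x, f x ≤ M) ∧
  (∃ r : ℝ, 0 < r ∧ ∀ x : ℝ, |x| ≤ r → f x = 0) ∧
  (∃ lp : ℝ, Tendsto f atTop (nhds lp)) ∧ (∃ lm : ℝ, Tendsto f atBot (nhds lm))


/-- Auxiliary: a continuous function with limits at both infinities satisfies an
ε-δ uniform continuity property. -/
theorem aux_uc_of_limits (g : ℝ → ℝ) (hg : Continuous g)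
    (Lp Lm : ℝ) (hp : Tendsto g atTop (nhds Lp)) (hm : Tendsto g atBot (nhds Lm)) :
    ∀ ε : ℝ, 0 < ε → ∃ δ : ℝ, 0 < δ ∧ ∀ x y : ℝ, |x - y| ≤ δ → |g x - g y| ≤ ε := by
  intro ε hε
  have hε2 : 0 < ε / 2 := by linarith
  obtain ⟨M1, hM1⟩ := (eventually_atTop).1 (Metric.tendsto_nhds.1 hp (ε/2) hε2)
  obtain ⟨M2, hM2⟩ := (eventually_atBot).1 (Metric.tendsto_nhds.1 hm (ε/2) hε2)
  set M : ℝ := max M1 (-M2) with hM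
  have hMM1 : M1 ≤ M := le_max_left _ _
  have hMM2 : -M ≤ M2 := by
    have := le_max_right M1 (-M2); linarith
  have hK : UniformContinuousOn g (Icc (-(M+1)) (M+1)) :=
    isCompact_Icc.uniformContinuousOn_of_continuous hg.continuousOn
  obtain ⟨δ0, hδ0, hδ0'⟩ := (Metric.uniformContinuousOn_iff).1 hK ε hε
  refine ⟨min (δ0/2) 1, by positivity, ?_⟩
  intro x y hxy
  obtain ⟨hd1, hd2⟩ := abs_sub_le_iff.1 (le_trans hxy (min_le_right _ _))
  have hxyδ : |x - y| < δ0 := lt_of_le_of_lt (le_trans hxy (min_le_left _ _)) (by linarith)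
  by_cases h1 : M ≤ x ∧ M ≤ y
  · have hx := hM1 x (le_trans hMM1 h1.1)
    have hy := hM1 y (le_trans hMM1 h1.2)
    rw [Real.dist_eq] at hx hy
    calc |g x - g y| ≤ |g x - Lp| + |g y - Lp| := by
          rw [abs_sub_comm (g y) Lp]; exact abs_sub_le _ _ _
    _ ≤ ε := by linarith
  · by_cases h2 : x ≤ -M ∧ y ≤ -M
    · have hx := hM2 x (le_trans h2.1 hMM2)
      have hy := hM2 y (le_trans h2.2 hMM2)
      rw [Real.dist_eq] at hx hy
      calc |g x - g y| ≤ |g x - Lm| + |g y - Lm| := by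
            rw [abs_sub_comm (g y) Lm]; exact abs_sub_le _ _ _
      _ ≤ ε := by linarith
    · have hx2 : x ≤ M + 1 := by by_contra hc; push_neg at hc; exact h1 ⟨by linarith, by linarith⟩
      have hy2 : y ≤ M + 1 := by by_contra hc; push_neg at hc; exact h1 ⟨by linarith, by linarith⟩
      have hx1 : -(M+1) ≤ x := by by_contra hc; push_neg at hc; exact h2 ⟨by linarith, by linarith⟩
      have hy1 : -(M+1) ≤ y := by by_contra hc; push_neg at hc; exact h2 ⟨by linarith, by linarith⟩
      have := hδ0' x ⟨hx1, hx2⟩ y ⟨hy1, hy2⟩ (by rwa [Real.dist_eq])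
      rw [Real.dist_eq] at this
      exact this.le

/-- Auxiliary: dyadic chaining bound for an almost-decreasing function. -/
theorem aux_chainL (L : ℝ → ℝ) (α X0 : ℝ) (hα : 0 < α) (hX0 : 1 ≤ X0)
    (hLpos : ∀ x : ℝ, 0 < x → 0 < L x)
    (hstep : ∀ x : ℝ, X0 ≤ x → L x ≤ 2 * L (2*x))
    (hmono : ∀ x y : ℝ, 0 < x → x ≤ y → L y ≤ (y/x) ^ α * L x) :
    ∀ n : ℕ, ∀ y x : ℝ, X0 ≤ y → y ≤ x → x ≤ 2^n * y →
      L y ≤ (2:ℝ) ^ (1+α) * (x/y) * L x := by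
  intro n
  induction n with
  | zero =>
    intro y x hy hyx hx
    have hxy : x = y := le_antisymm (by simpa using hx) hyx
    subst hxy
    have hy0 : 0 < x := lt_of_lt_of_le (by linarith) hy
    have h1 : (1:ℝ) ≤ (2:ℝ) ^ (1+α) := Real.one_le_rpow (by norm_num) (by linarith)
    have h2 : 0 < L x := hLpos x hy0
    have : x / x = 1 := div_self (ne_of_gt hy0)
    rw [this]
    nlinarith
  | succ n ih =>
    intro y x hy hyx hx
    have hy0 : 0 < y := lt_of_lt_of_le (by linarith) hy
    have hx0 : 0 < x := lt_of_lt_of_le hy0 hyx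
    have hr1 : (1:ℝ) ≤ x / y := (one_le_div hy0).2 hyx
    have h2p : (0:ℝ) < (2:ℝ) ^ (1+α) := Real.rpow_pos_of_pos (by norm_num) _
    have h2e : (2:ℝ) ^ (1+α) = 2 * (2:ℝ) ^ α := by
      rw [Real.rpow_add (by norm_num : (0:ℝ) < 2), Real.rpow_one]
    by_cases hxy : x ≤ 2 * y
    · have h1 : L y ≤ 2 * L (2*y) := hstep y hy
      have h2 : L (2*y) ≤ ((2*y)/x) ^ α * L x := hmono x (2*y) hx0 hxy
      have h3 : (2*y)/x ≤ 2 := by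
        rw [div_le_iff₀ hx0]; nlinarith
      have h3' : (0:ℝ) ≤ (2*y)/x := by positivity
      have h4 : ((2*y)/x) ^ α ≤ (2:ℝ) ^ α := Real.rpow_le_rpow h3' h3 hα.le
      have hLx : 0 < L x := hLpos x hx0
      have h2a : (0:ℝ) < (2:ℝ) ^ α := Real.rpow_pos_of_pos (by norm_num) _
      calc L y ≤ 2 * L (2*y) := h1
      _ ≤ 2 * (((2*y)/x) ^ α * L x) := by nlinarith [hLpos (2*y) (by linarith)]
      _ ≤ 2 * ((2:ℝ) ^ α * L x) := by nlinarith
      _ = (2:ℝ) ^ (1+α) * 1 * L x := by rw [h2e]; ring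
      _ ≤ (2:ℝ) ^ (1+α) * (x/y) * L x := by gcongr
    · push_neg at hxy
      have h1 : L y ≤ 2 * L (2*y) := hstep y hy
      have h5 := ih (2*y) x (by linarith) hxy.le (by rw [pow_succ] at hx; linarith)
      have : (2:ℝ) ^ (1+α) * (x/(2*y)) * L x * 2 = (2:ℝ) ^ (1+α) * (x/y) * L x := by
        field_simp
      nlinarith [hLpos x hx0]

/-- Auxiliary: for a stationary sequence, every marginal tail probability equals
that of the 0-th variable. -/
theorem aux_marg_eq {Ω : Type*} [MeasurableSpace Ω] (P : Measure Ω)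
    (X : ℕ → Ω → ℝ) (hXmeas : ∀ i, Measurable (X i))
    (hstat : IsStationarySeq P X) (i : ℕ) (u : ℝ) :
    P {ω | u < |X i ω|} = P {ω | u < |X 0 ω|} := by
  have hset : MeasurableSet {x : ℝ | u < |x|} :=
    measurableSet_lt measurable_const (continuous_abs.measurable)
  have hF : ∀ m : ℕ, Measurable (fun ω => fun j : ℕ => X (j + m) ω) :=
    fun m => measurable_pi_lambda _ (fun j => hXmeas _)
  have hF0 : Measurable (fun ω => fun j : ℕ => X j ω) :=
    measurable_pi_lambda _ (fun j => hXmeas _)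
  have hmap : Measure.map (X i) P = Measure.map (X 0) P := by
    have h1 : Measure.map (X i) P
        = Measure.map ((fun p : ℕ → ℝ => p 0) ∘ (fun ω => fun j : ℕ => X (j + i) ω)) P := by
      congr 1
      funext ω
      simp
    have h2 : Measure.map (X 0) P
        = Measure.map ((fun p : ℕ → ℝ => p 0) ∘ (fun ω => fun j : ℕ => X j ω)) P := rfl
    rw [h1, h2, ← Measure.map_map (measurable_pi_apply 0) (hF i),
      ← Measure.map_map (measurable_pi_apply 0) hF0, hstat i]
  have e1 : {ω | u < |X i ω|} = (X i) ⁻¹' {x : ℝ | u < |x|} := rfl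
  have e2 : {ω | u < |X 0 ω|} = (X 0) ⁻¹' {x : ℝ | u < |x|} := rfl
  rw [e1, e2, ← Measure.map_apply (hXmeas i) hset, ← Measure.map_apply (hXmeas 0) hset, hmap]

set_option maxHeartbeats 1000000 in
/-- Under the hypotheses of Proposition 4.1 (strict stationarity,
regular variation with α ∈ (0,2), LD, k_n = o(n^t), l_n ~ n^q with
q = (1/2)·min{1/α, (1−t)/(1+α)}), for every f of class C_K⁺,
k_n · E|exp(−f(a_n⁻¹ S_{r_n})) − exp(−f(a_n⁻¹ S_{r_n − l_n}))| → 0. -/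
theorem stmt8
    {Ω : Type*} [MeasurableSpace Ω] (P : Measure Ω) [IsProbabilityMeasure P]
    (X : ℕ → Ω → ℝ) (hXmeas : ∀ i, Measurable (X i))
    (hstat : IsStationarySeq P X)
    (α : ℝ) (hα0 : 0 < α) (hα2 : α < 2)
    (hreg : RegVarOf P (X 0) α)
    (a : ℕ → ℝ) (hapos : ∀ n, 0 < a n)
    (hna : Tendsto (fun n : ℕ => (n : ℝ) * (P {ω | a n < |X 0 ω|}).toReal) atTop (nhds 1))
    (r : ℕ → ℕ) (hrpos : ∀ n, 1 ≤ r n)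
    (hrinf : Tendsto r atTop atTop)
    (hrn : Tendsto (fun n : ℕ => (r n : ℝ) / (n : ℝ)) atTop (nhds 0))
    (cp cm : ℝ) (hcp : 0 ≤ cp) (hcm : 0 ≤ cm)
    (hLD : ∀ x : ℝ, 0 < x →
      Tendsto (fun n : ℕ => ((n / r n : ℕ) : ℝ) *
        (P {ω | x * a n < pS X (r n) ω}).toReal) atTop (nhds (cp * x ^ (-α))) ∧
      Tendsto (fun n : ℕ => ((n / r n : ℕ) : ℝ) *
        (P {ω | pS X (r n) ω < -(x * a n)}).toReal) atTop (nhds (cm * x ^ (-α))))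
    (t : ℝ) (ht0 : 0 < t) (ht1 : t < 1)
    (hkn : Tendsto (fun n : ℕ => ((n / r n : ℕ) : ℝ) / (n : ℝ) ^ t) atTop (nhds 0))
    (q : ℝ) (hq : q = (min (1 / α) ((1 - t) / (1 + α))) / 2)
    (l : ℕ → ℕ) (hlpos : ∀ n, 1 ≤ l n)
    (hl : Tendsto (fun n : ℕ => (l n : ℝ) / (n : ℝ) ^ q) atTop (nhds 1)) :
    ∀ f : ℝ → ℝ, CKplus f →
      Tendsto (fun n : ℕ => ((n / r n : ℕ) : ℝ) *
          ∫ ω, |Real.exp (- f (pS X (r n) ω / a n))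
            - Real.exp (- f (pS X (r n - l n) ω / a n))| ∂P)
        atTop (nhds 0) := by
  classical
  obtain ⟨L, hLmeas, hLpos, hsv, hLform⟩ := hreg
  set k : ℕ → ℝ := fun n => ((n / r n : ℕ) : ℝ) with hkdef
  set T : ℝ → ℝ := fun u => (P {ω | u < |X 0 ω|}).toReal with hTdef
  have hTform : ∀ x : ℝ, 0 < x → T x = x ^ (-α) * L x := hLform
  have hna' : Tendsto (fun n : ℕ => (n : ℝ) * T (a n)) atTop (nhds 1) := hna
  have hknn : ∀ n, 0 ≤ k n := fun n => Nat.cast_nonneg _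
  have hTnn : ∀ u, 0 ≤ T u := fun u => ENNReal.toReal_nonneg
  have hTanti : ∀ u v : ℝ, u ≤ v → T v ≤ T u := by
    intro u v huv
    exact ENNReal.toReal_mono (measure_ne_top P _)
      (measure_mono (fun ω hω => lt_of_le_of_lt huv hω))
  have hα1 : (0:ℝ) < 1 + α := by linarith
  -- the dyadic step bound for L
  obtain ⟨X0, hX0one, hstep⟩ : ∃ X0 : ℝ, 1 ≤ X0 ∧ ∀ x : ℝ, X0 ≤ x → L x ≤ 2 * L (2*x) := by
    have h2 := hsv 2 (by norm_num)
    obtain ⟨X0', hX0'⟩ := (eventually_atTop).1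
      (h2.eventually_const_lt (by norm_num : (1/2:ℝ) < 1))
    refine ⟨max X0' 1, le_max_right _ _, ?_⟩
    intro x hx
    have hx1 : (1:ℝ) ≤ x := le_trans (le_max_right _ _) hx
    have hx0 : 0 < x := by linarith
    have hr := hX0' x (le_trans (le_max_left _ _) hx)
    have hLx : 0 < L x := hLpos x hx0
    rw [lt_div_iff₀ hLx] at hr
    linarith
  have hX0pos : (0:ℝ) < X0 := by linarith
  -- monotone comparison from tail monotonicity
  have hmono : ∀ x y : ℝ, 0 < x → x ≤ y → L y ≤ (y/x) ^ α * L x := by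
    intro x y hx hxy
    have hy : 0 < y := lt_of_lt_of_le hx hxy
    have h1 : T y ≤ T x := hTanti x y hxy
    rw [hTform x hx, hTform y hy] at h1
    have h2 : y ^ α * (y ^ (-α) * L y) ≤ y ^ α * (x ^ (-α) * L x) :=
      mul_le_mul_of_nonneg_left h1 (Real.rpow_nonneg hy.le α)
    have hyaa : y ^ α * y ^ (-α) = 1 := by
      rw [← Real.rpow_add hy]; simp
    rw [← mul_assoc, hyaa, one_mul] at h2
    calc L y ≤ y ^ α * (x ^ (-α) * L x) := h2
    _ = (y/x) ^ α * L x := by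
        rw [Real.div_rpow hy.le hx.le, Real.rpow_neg hx.le]
        field_simp
  -- chaining corollary
  have hchain : ∀ y x : ℝ, X0 ≤ y → y ≤ x → L y ≤ (2:ℝ) ^ (1+α) * (x/y) * L x := by
    intro y x hy hxy
    obtain ⟨n, hn⟩ := pow_unbounded_of_one_lt x (one_lt_two (α := ℝ))
    refine aux_chainL L α X0 hα0 hX0one hLpos hstep hmono n y x hy hxy ?_
    calc x ≤ (2:ℝ)^n := hn.le
    _ ≤ 2^n * y := le_mul_of_one_le_right (by positivity) (le_trans hX0one hy)
  -- T (a n) → 0 and a n → ∞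
  have hTa : Tendsto (fun n => T (a n)) atTop (nhds 0) := by
    have h := hna'.mul tendsto_inv_atTop_nhds_zero_nat
    rw [one_mul] at h
    refine h.congr' ?_
    filter_upwards [eventually_ge_atTop 1] with n hn
    have hn0 : ((n:ℝ)) ≠ 0 := by positivity
    field_simp
  have hainf : Tendsto a atTop atTop := by
    rw [tendsto_atTop]
    intro M
    set M' : ℝ := max M 1 with hM'
    have hM'0 : 0 < M' := lt_of_lt_of_le one_pos (le_max_right _ _)
    have hTM' : 0 < T M' := by
      rw [hTform M' hM'0]
      have := hLpos M' hM'0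
      have := Real.rpow_pos_of_pos hM'0 (-α)
      positivity
    filter_upwards [hTa.eventually_lt_const hTM'] with n hn
    by_contra hc
    push_neg at hc
    exact absurd (hTanti (a n) M' (by linarith [le_max_left M (1:ℝ)])) (by linarith)
  -- exponent facts
  have hu0 : (0:ℝ) < (1+α)⁻¹ := by positivity
  have hu1 : (1+α)⁻¹ * (1+α) = 1 := inv_mul_cancel₀ (ne_of_gt hα1)
  have hult : (1+α)⁻¹ < 1 := by nlinarith
  have hqle : q ≤ (1-t) * (1+α)⁻¹ / 2 := by
    have h1 : min (1/α) ((1 - t) / (1 + α)) ≤ (1-t)/(1+α) := min_le_right _ _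
    have h2 : (1-t)/(1+α) = (1-t) * (1+α)⁻¹ := div_eq_mul_inv _ _
    rw [hq]
    linarith
  have hq0 : 0 < q := by
    rw [hq]
    have h1 : 0 < min (1/α) ((1 - t) / (1 + α)) :=
      lt_min (by positivity) (div_pos (by linarith) hα1)
    linarith
  have hpq : 0 < (1+α)⁻¹ - q := by nlinarith
  have hexp : t + q*(2+α) - 1 < 0 := by nlinarith
  -- eventual upper bound on l
  have hl2 : ∀ᶠ n : ℕ in atTop, (l n : ℝ) ≤ 2 * (n:ℝ)^q := by
    filter_upwards [hl.eventually_lt_const (one_lt_two (α := ℝ)), eventually_ge_atTop 1]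
      with n h1 h2
    have hn0 : (0:ℝ) < (n:ℝ) := by exact_mod_cast h2
    have hq0' : (0:ℝ) < (n:ℝ)^q := Real.rpow_pos_of_pos hn0 _
    have : (l n : ℝ) = (l n / (n:ℝ)^q) * (n:ℝ)^q := by field_simp
    rw [this]
    nlinarith
  -- lower bound on a
  set c1 : ℝ := X0 * L X0 / (2:ℝ)^(1+α) with hc1def
  have h2pow : (0:ℝ) < (2:ℝ)^(1+α) := Real.rpow_pos_of_pos (by norm_num) _
  have hc1 : 0 < c1 := by
    have := hLpos X0 hX0pos
    positivity
  have halb : ∀ᶠ n : ℕ in atTop, (c1/2 * (n:ℝ)) ^ ((1+α)⁻¹) ≤ a n := by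
    filter_upwards [hainf.eventually_ge_atTop X0,
      hna'.eventually_lt_const (by norm_num : (1:ℝ) < 2), eventually_ge_atTop 1]
      with n h1 h2 h3
    have han : 0 < a n := hapos n
    have hn0 : (0:ℝ) < (n:ℝ) := by exact_mod_cast h3
    have hLa : c1 / a n ≤ L (a n) := by
      have hch := hchain X0 (a n) (le_refl X0) h1
      have h4 := mul_le_mul_of_nonneg_right hch hX0pos.le
      have h5 : (2:ℝ) ^ (1+α) * (a n / X0) * L (a n) * X0
          = (2:ℝ) ^ (1+α) * a n * L (a n) := by
        field_simp
      rw [h5] at h4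
      rw [div_le_iff₀ han, hc1def, div_le_iff₀ h2pow]
      nlinarith
    have hTlb : c1 * (a n) ^ (-(1+α)) ≤ T (a n) := by
      rw [hTform _ han]
      have he1 : (a n)^(-(1+α)) = (a n)^(-α) * (a n)⁻¹ := by
        rw [← Real.rpow_neg_one (a n), ← Real.rpow_add han]
        ring_nf
      rw [he1]
      have : c1 * ((a n)^(-α) * (a n)⁻¹) = (a n)^(-α) * (c1 / a n) := by
        rw [div_eq_mul_inv]; ring
      rw [this]
      exact mul_le_mul_of_nonneg_left hLa (Real.rpow_nonneg han.le _)
    have hTub : T (a n) ≤ 2 / (n:ℝ) := by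
      rw [le_div_iff₀ hn0]
      nlinarith
    have hApos : 0 < (a n)^(1+α) := Real.rpow_pos_of_pos han _
    have hneg : (a n)^(-(1+α)) = ((a n)^(1+α))⁻¹ := Real.rpow_neg han.le _
    have hA : c1/2 * (n:ℝ) ≤ (a n) ^ (1+α) := by
      rw [hneg] at hTlb
      have h6 : c1 * ((a n)^(1+α))⁻¹ ≤ 2 / n := le_trans hTlb hTub
      rw [← div_eq_mul_inv, div_le_div_iff₀ hApos hn0] at h6
      linarith
    calc (c1/2 * (n:ℝ)) ^ ((1+α)⁻¹) ≤ ((a n)^(1+α)) ^ ((1+α)⁻¹) :=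
      Real.rpow_le_rpow (by positivity) hA (by positivity)
    _ = a n := by
      rw [← Real.rpow_mul han.le, mul_inv_cancel₀ (ne_of_gt hα1), Real.rpow_one]
  -- a n / l n → ∞
  have hal : Tendsto (fun n : ℕ => a n / (l n : ℝ)) atTop atTop := by
    have htend : Tendsto (fun n : ℕ => ((c1/2)^((1+α)⁻¹)/2) * (n:ℝ)^((1+α)⁻¹ - q))
        atTop atTop := by
      refine Tendsto.const_mul_atTop ?_ ?_
      · have : (0:ℝ) < (c1/2)^((1+α)⁻¹) := Real.rpow_pos_of_pos (by positivity) _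
        positivity
      · exact (tendsto_rpow_atTop hpq).comp tendsto_natCast_atTop_atTop
    refine tendsto_atTop_mono' atTop ?_ htend
    filter_upwards [halb, hl2, eventually_ge_atTop 1] with n h1 h2 h3
    have hn0 : (0:ℝ) < (n:ℝ) := by exact_mod_cast h3
    have hln : (0:ℝ) < (l n : ℝ) := by exact_mod_cast hlpos n
    have hq0' : (0:ℝ) < (n:ℝ)^q := Real.rpow_pos_of_pos hn0 _
    have e1 : (c1/2 * (n:ℝ))^((1+α)⁻¹) = (c1/2)^((1+α)⁻¹) * (n:ℝ)^((1+α)⁻¹) :=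
      Real.mul_rpow (by positivity) (Nat.cast_nonneg n)
    have e2 : ((c1/2)^((1+α)⁻¹)/2) * (n:ℝ)^((1+α)⁻¹ - q)
        = ((c1/2)^((1+α)⁻¹) * (n:ℝ)^((1+α)⁻¹)) / (2 * (n:ℝ)^q) := by
      rw [Real.rpow_sub hn0]
      field_simp
    rw [e2]
    refine div_le_div₀ (hapos n).le ?_ hln h2
    rw [← e1]; exact h1
  -- the central smallness: k n * l n * T (δ a n / l n) → 0
  have hKeyδ : ∀ δ : ℝ, 0 < δ → δ ≤ 1 →
      Tendsto (fun n : ℕ => k n * (l n : ℝ) * T (δ * a n / (l n : ℝ))) atTop (nhds 0) := by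
    intro δ hδ0 hδ1
    set c3 : ℝ := (2:ℝ)^(1+α) * δ^(-(α+1)) with hc3def
    have hδa : (0:ℝ) < δ^(-(α+1)) := Real.rpow_pos_of_pos hδ0 _
    have hc3 : 0 < c3 := by positivity
    -- hS : k n * l n ^ (2+α) / n → 0
    have hS : Tendsto (fun n : ℕ => k n * (l n : ℝ)^((2:ℝ)+α) / (n:ℝ)) atTop (nhds 0) := by
      have hH : Tendsto (fun n : ℕ => (k n / (n:ℝ)^t) * ((l n / (n:ℝ)^q)^((2:ℝ)+α))
          * (n:ℝ)^(t + q*(2+α) - 1)) atTop (nhds 0) := by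
        have h3 : Tendsto (fun n : ℕ => (n:ℝ)^(t + q*(2+α) - 1)) atTop (nhds 0) := by
          have := (tendsto_rpow_neg_atTop (by linarith : (0:ℝ) < -(t + q*(2+α) - 1))).comp
            tendsto_natCast_atTop_atTop
          simpa [Function.comp_def] using this
        have h2 : Tendsto (fun n : ℕ => ((l n : ℝ) / (n:ℝ)^q)^((2:ℝ)+α)) atTop (nhds 1) := by
          have := hl.rpow_const (Or.inr (by linarith : (0:ℝ) ≤ 2 + α))
          simpa using this
        have h4 := (hkn.mul h2).mul h3
        simpa using h4
      refine hH.congr' ?_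
      filter_upwards [eventually_ge_atTop 1] with n hn
      have hn0 : (0:ℝ) < (n:ℝ) := by exact_mod_cast hn
      have hln : (0:ℝ) < (l n : ℝ) := by exact_mod_cast hlpos n
      have ht0' : (0:ℝ) < (n:ℝ)^t := Real.rpow_pos_of_pos hn0 _
      have hq0' : (0:ℝ) < (n:ℝ)^q := Real.rpow_pos_of_pos hn0 _
      have hqq : (0:ℝ) < (n:ℝ)^(q*(2+α)) := Real.rpow_pos_of_pos hn0 _
      have e1 : ((l n : ℝ) / (n:ℝ)^q)^((2:ℝ)+α)
          = (l n : ℝ)^((2:ℝ)+α) / (n:ℝ)^(q*(2+α)) := by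
        rw [Real.div_rpow hln.le hq0'.le, ← Real.rpow_mul hn0.le]
      have e4 : (n:ℝ)^t * (n:ℝ)^(q*(2+α)) = (n:ℝ)^(t + q*(2+α)) := by
        rw [← Real.rpow_add hn0]
      have e5 : (n:ℝ)^(t + q*(2+α) - 1) * (n:ℝ) = (n:ℝ)^(t + q*(2+α)) := by
        rw [← Real.rpow_add_one (ne_of_gt hn0) (t + q*(2+α) - 1)]
        ring_nf
      calc (k n / (n:ℝ)^t) * (((l n : ℝ) / (n:ℝ)^q)^((2:ℝ)+α)) * (n:ℝ)^(t + q*(2+α) - 1)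
          = (k n * (l n : ℝ)^((2:ℝ)+α) * (n:ℝ)^(t + q*(2+α) - 1)) / ((n:ℝ)^(t + q*(2+α))) := by
            rw [e1, ← e4]
            field_simp
      _ = k n * (l n : ℝ)^((2:ℝ)+α) / (n:ℝ) := by
            rw [← e5]
            have hne : (n:ℝ)^(t + q*(2+α) - 1) ≠ 0 := ne_of_gt (Real.rpow_pos_of_pos hn0 _)
            field_simp
            try ring
    -- eventual key bound
    have hG : Tendsto (fun n : ℕ => c3 * (k n * (l n : ℝ)^((2:ℝ)+α) / (n:ℝ))
        * ((n:ℝ) * T (a n))) atTop (nhds 0) := by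
      have h5 := (hS.const_mul c3).mul hna'
      simpa using h5
    refine squeeze_zero' ?_ ?_ hG
    · filter_upwards [] with n
      exact mul_nonneg (mul_nonneg (hknn n) (Nat.cast_nonneg _)) (hTnn _)
    · filter_upwards [(hal.const_mul_atTop hδ0).eventually_ge_atTop X0,
        eventually_ge_atTop 1] with n hy1 hn1
      have han : 0 < a n := hapos n
      have hn0 : (0:ℝ) < (n:ℝ) := by exact_mod_cast hn1
      have hln : (0:ℝ) < (l n : ℝ) := by exact_mod_cast hlpos n
      have hln1 : (1:ℝ) ≤ (l n : ℝ) := by exact_mod_cast hlpos n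
      have hy0 : 0 < δ * a n / (l n : ℝ) := by positivity
      have hyX0 : X0 ≤ δ * a n / (l n : ℝ) := by
        calc X0 ≤ δ * (a n / (l n : ℝ)) := hy1
        _ = δ * a n / (l n : ℝ) := by ring
      have hya : δ * a n / (l n : ℝ) ≤ a n := by
        rw [div_le_iff₀ hln]
        nlinarith
      -- L y bound
      have hLy : L (δ * a n / (l n : ℝ)) ≤ (2:ℝ)^(1+α) * ((l n : ℝ)/δ) * L (a n) := by
        have hh := hchain (δ * a n / (l n : ℝ)) (a n) hyX0 hya
        have he : a n / (δ * a n / (l n : ℝ)) = (l n : ℝ)/δ := by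
          field_simp
        rwa [he] at hh
      -- T y bound
      have hTy : T (δ * a n / (l n : ℝ)) ≤ c3 * (l n : ℝ)^((1:ℝ)+α) * T (a n) := by
        rw [hTform _ hy0, hTform _ han]
        have hyrw : (δ * a n / (l n : ℝ)) ^ (-α)
            = δ^(-α) * (a n)^(-α) * ((l n : ℝ))^α := by
          rw [Real.div_rpow (by positivity) hln.le, Real.mul_rpow hδ0.le han.le,
            Real.rpow_neg hln.le]
          field_simp
        have hyp : (0:ℝ) < (δ * a n / (l n : ℝ)) ^ (-α) := Real.rpow_pos_of_pos hy0 _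
        have step1 : (δ * a n / (l n : ℝ)) ^ (-α) * L (δ * a n / (l n : ℝ))
            ≤ (δ * a n / (l n : ℝ)) ^ (-α) * ((2:ℝ)^(1+α) * ((l n : ℝ)/δ) * L (a n)) :=
          mul_le_mul_of_nonneg_left hLy hyp.le
        refine le_trans step1 (le_of_eq ?_)
        rw [hyrw, hc3def]
        have hδb : δ^(-(α+1)) = δ^(-α) * δ⁻¹ := by
          rw [← Real.rpow_neg_one δ, ← Real.rpow_add hδ0]
          ring_nf
        have hlb : (l n : ℝ)^((1:ℝ)+α) = (l n : ℝ) * (l n : ℝ)^α := by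
          rw [Real.rpow_add hln, Real.rpow_one]
        rw [hδb, hlb]
        field_simp
      -- combine
      have hll : (l n : ℝ) * (l n : ℝ)^((1:ℝ)+α) = (l n : ℝ)^((2:ℝ)+α) := by
        have h2a : ((2:ℝ)+α) = 1 + (1+α) := by ring
        rw [h2a, Real.rpow_add hln 1 (1+α), Real.rpow_one]
      have h1 : k n * (l n : ℝ) * T (δ * a n / (l n : ℝ))
          ≤ k n * (l n : ℝ) * (c3 * (l n : ℝ)^((1:ℝ)+α) * T (a n)) :=
        mul_le_mul_of_nonneg_left hTy (mul_nonneg (hknn n) hln.le)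
      refine le_trans h1 (le_of_eq ?_)
      have e6 : k n * (l n : ℝ) * (c3 * (l n : ℝ)^((1:ℝ)+α) * T (a n))
          = c3 * (k n * ((l n : ℝ) * (l n : ℝ)^((1:ℝ)+α))) * T (a n) := by ring
      rw [e6, hll]
      field_simp
    -- measurability of partial sums
  have hpS : ∀ m : ℕ, Measurable (pS X m) := by
    intro m
    exact Finset.measurable_sum (Finset.range m) (fun i _ => hXmeas i)
  intro f hf
  obtain ⟨hfc, hfnn, ⟨Mf, hMf⟩, ⟨r0, hr0, hr0z⟩, ⟨lp, hlp⟩, ⟨lm, hlm⟩⟩ := hf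
  have hgc : Continuous (fun x : ℝ => Real.exp (- f x)) :=
    Real.continuous_exp.comp hfc.neg
  have hgp : Tendsto (fun x : ℝ => Real.exp (- f x)) atTop (nhds (Real.exp (-lp))) :=
    (Real.continuous_exp.continuousAt.tendsto).comp hlp.neg
  have hgm : Tendsto (fun x : ℝ => Real.exp (- f x)) atBot (nhds (Real.exp (-lm))) :=
    (Real.continuous_exp.continuousAt.tendsto).comp hlm.neg
  have hUC := aux_uc_of_limits (fun x : ℝ => Real.exp (- f x)) hgc _ _ hgp hgm
  have hg1 : ∀ u : ℝ, Real.exp (- f u) ≤ 1 :=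
    fun u => Real.exp_le_one_iff.2 (neg_nonpos.2 (hfnn u))
  have hg0 : ∀ u : ℝ, 0 < Real.exp (- f u) := fun u => Real.exp_pos _
  have hgb : ∀ u v : ℝ, |Real.exp (- f u) - Real.exp (- f v)| ≤ 1 := by
    intro u v
    rw [abs_sub_le_iff]
    constructor <;> nlinarith [hg1 u, hg1 v, hg0 u, hg0 v]
  rw [Metric.tendsto_nhds]
  intro ε hε
  set x0 : ℝ := r0/2 with hx0def
  have hx0 : 0 < x0 := by rw [hx0def]; linarith
  have hx0a : (0:ℝ) < x0^(-α) := Real.rpow_pos_of_pos hx0 _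
  set C : ℝ := (cp+cm) * x0^(-α) + 1 with hCdef
  have hC1 : 0 < C := by
    have := mul_nonneg (add_nonneg hcp hcm) hx0a.le
    rw [hCdef]; linarith
  set ε' : ℝ := ε/(2*C) with hε'def
  have hε'pos : 0 < ε' := by rw [hε'def]; positivity
  obtain ⟨δ0, hδ0, hδ0'⟩ := hUC ε' hε'pos
  set δ : ℝ := min δ0 (min x0 1) with hδdef
  have hδp : 0 < δ := lt_min hδ0 (lt_min hx0 one_pos)
  have hδδ0 : δ ≤ δ0 := min_le_left _ _
  have hδx0 : δ ≤ x0 := le_trans (min_le_right _ _) (min_le_left _ _)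
  have hδ1 : δ ≤ 1 := le_trans (min_le_right _ _) (min_le_right _ _)
  -- part B : eventual bound on the big-block tail
  have hBev : ∀ᶠ n : ℕ in atTop,
      k n * (P {ω | x0 * a n < |pS X (r n) ω|}).toReal < C := by
    have hsum := (hLD x0 hx0).1.add (hLD x0 hx0).2
    have hlt : cp * x0^(-α) + cm * x0^(-α) < C := by
      have : (cp+cm) * x0^(-α) = cp * x0^(-α) + cm * x0^(-α) := by ring
      rw [hCdef]; linarith
    filter_upwards [hsum.eventually_lt_const hlt] with n hn
    have hmu : P {ω | x0 * a n < |pS X (r n) ω|}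
        ≤ P {ω | x0 * a n < pS X (r n) ω} + P {ω | pS X (r n) ω < -(x0 * a n)} := by
      refine le_trans (measure_mono ?_) (measure_union_le _ _)
      intro ω hω
      simp only [Set.mem_setOf_eq] at hω
      rcases lt_abs.1 hω with h | h
      · exact Or.inl h
      · exact Or.inr (by simp only [Set.mem_setOf_eq]; linarith)
    have hmu' : (P {ω | x0 * a n < |pS X (r n) ω|}).toReal
        ≤ (P {ω | x0 * a n < pS X (r n) ω}).toReal
          + (P {ω | pS X (r n) ω < -(x0 * a n)}).toReal := by
      rw [← ENNReal.toReal_add (measure_ne_top P _) (measure_ne_top P _)]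
      exact ENNReal.toReal_mono
        (ENNReal.add_ne_top.2 ⟨measure_ne_top P _, measure_ne_top P _⟩) hmu
    calc k n * (P {ω | x0 * a n < |pS X (r n) ω|}).toReal
        ≤ k n * (P {ω | x0 * a n < pS X (r n) ω}).toReal
          + k n * (P {ω | pS X (r n) ω < -(x0 * a n)}).toReal := by
          rw [← mul_add]
          exact mul_le_mul_of_nonneg_left hmu' (hknn n)
    _ < C := hn
  -- part C : the coupling term tends to zero
  have hCev : Tendsto (fun n : ℕ =>
      k n * (P {ω | δ * a n < |pS X (r n) ω - pS X (r n - l n) ω|}).toReal)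
      atTop (nhds 0) := by
    refine squeeze_zero'
      (Eventually.of_forall fun n => mul_nonneg (hknn n) ENNReal.toReal_nonneg)
      ?_ (hKeyδ δ hδp hδ1)
    filter_upwards [] with n
    have han : 0 < a n := hapos n
    have hc1' : 1 ≤ r n - (r n - l n) := by
      have := hrpos n; have := hlpos n; omega
    have hcl : r n - (r n - l n) ≤ l n := by omega
    set c : ℕ := r n - (r n - l n) with hcdef
    have hcr : (c:ℝ) ≤ (l n : ℝ) := by exact_mod_cast hcl
    have hcpos : (0:ℝ) < (c:ℝ) := by exact_mod_cast hc1'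
    have hln1 : (0:ℝ) < (l n : ℝ) := by exact_mod_cast hlpos n
    have hsub : {ω | δ * a n < |pS X (r n) ω - pS X (r n - l n) ω|}
        ⊆ ⋃ i ∈ Finset.Ico (r n - l n) (r n), {ω | δ * a n / (c:ℝ) < |X i ω|} := by
      intro ω hω
      simp only [Set.mem_setOf_eq] at hω
      by_contra hcon
      simp only [Set.mem_iUnion, Set.mem_setOf_eq, not_exists, not_lt] at hcon
      have hD : pS X (r n) ω - pS X (r n - l n) ω
          = ∑ i ∈ Finset.Ico (r n - l n) (r n), X i ω :=
        (Finset.sum_Ico_eq_sub _ (Nat.sub_le _ _)).symm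
      have habs : |∑ i ∈ Finset.Ico (r n - l n) (r n), X i ω| ≤ δ * a n := by
        refine le_trans (Finset.abs_sum_le_sum_abs _ _) ?_
        have hcard : (Finset.Ico (r n - l n) (r n)).card = c := by
          rw [Nat.card_Ico]
        calc ∑ i ∈ Finset.Ico (r n - l n) (r n), |X i ω|
            ≤ ∑ _i ∈ Finset.Ico (r n - l n) (r n), (δ * a n / (c:ℝ)) :=
              Finset.sum_le_sum (fun i hi => hcon i hi)
        _ = (c:ℝ) * (δ * a n / (c:ℝ)) := by
              rw [Finset.sum_const, hcard, nsmul_eq_mul]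
        _ = δ * a n := by field_simp
      rw [hD] at hω
      exact absurd hω (not_lt.2 habs)
    have hmb : P {ω | δ * a n < |pS X (r n) ω - pS X (r n - l n) ω|}
        ≤ (c : ENNReal) * P {ω | δ * a n / (c:ℝ) < |X 0 ω|} := by
      calc P {ω | δ * a n < |pS X (r n) ω - pS X (r n - l n) ω|}
          ≤ P (⋃ i ∈ Finset.Ico (r n - l n) (r n), {ω | δ * a n / (c:ℝ) < |X i ω|}) :=
            measure_mono hsub
      _ ≤ ∑ i ∈ Finset.Ico (r n - l n) (r n), P {ω | δ * a n / (c:ℝ) < |X i ω|} :=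
            measure_biUnion_finset_le _ _
      _ = ∑ _i ∈ Finset.Ico (r n - l n) (r n), P {ω | δ * a n / (c:ℝ) < |X 0 ω|} :=
            Finset.sum_congr rfl (fun i _ => aux_marg_eq P X hXmeas hstat i _)
      _ = (c : ENNReal) * P {ω | δ * a n / (c:ℝ) < |X 0 ω|} := by
            rw [Finset.sum_const, Nat.card_Ico, nsmul_eq_mul]
    have hmb' : (P {ω | δ * a n < |pS X (r n) ω - pS X (r n - l n) ω|}).toReal
        ≤ (c:ℝ) * T (δ * a n / (c:ℝ)) := by
      have h := ENNReal.toReal_mono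
        (ENNReal.mul_ne_top (ENNReal.natCast_ne_top c) (measure_ne_top P _)) hmb
      rwa [ENNReal.toReal_mul, ENNReal.toReal_natCast] at h
    have hTc : T (δ * a n / (c:ℝ)) ≤ T (δ * a n / (l n : ℝ)) :=
      hTanti _ _ (div_le_div_of_nonneg_left (by positivity) hcpos hcr)
    calc k n * (P {ω | δ * a n < |pS X (r n) ω - pS X (r n - l n) ω|}).toReal
        ≤ k n * ((c:ℝ) * T (δ * a n / (c:ℝ))) :=
          mul_le_mul_of_nonneg_left hmb' (hknn n)
    _ ≤ k n * ((l n : ℝ) * T (δ * a n / (l n : ℝ))) :=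
          mul_le_mul_of_nonneg_left
            (mul_le_mul hcr hTc (hTnn _) hln1.le) (hknn n)
    _ = k n * (l n : ℝ) * T (δ * a n / (l n : ℝ)) := by ring
  -- combine everything
  filter_upwards [hBev, hCev.eventually_lt_const (by linarith : (0:ℝ) < ε/2)]
    with n hB hPB
  have han : 0 < a n := hapos n
  set An : Set Ω := {ω | x0 * a n < |pS X (r n) ω|} with hAndef
  set Bn : Set Ω := {ω | δ * a n < |pS X (r n) ω - pS X (r n - l n) ω|} with hBndef
  have hAnm : MeasurableSet An := measurableSet_lt measurable_const (hpS (r n)).abs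
  have hBnm : MeasurableSet Bn :=
    measurableSet_lt measurable_const ((hpS (r n)).sub (hpS (r n - l n))).abs
  have hpt : ∀ ω, |Real.exp (- f (pS X (r n) ω / a n))
      - Real.exp (- f (pS X (r n - l n) ω / a n))|
      ≤ An.indicator (fun _ => ε') ω + Bn.indicator (fun _ => (1:ℝ)) ω := by
    intro ω
    have hIA : 0 ≤ An.indicator (fun _ => ε') ω :=
      Set.indicator_nonneg (fun _ _ => hε'pos.le) ω
    have hIB : 0 ≤ Bn.indicator (fun _ => (1:ℝ)) ω :=
      Set.indicator_nonneg (fun _ _ => zero_le_one) ω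
    by_cases hb : ω ∈ Bn
    · rw [Set.indicator_of_mem hb]
      have := hgb (pS X (r n) ω / a n) (pS X (r n - l n) ω / a n)
      linarith
    · rw [Set.indicator_of_notMem hb]
      have hb' : |pS X (r n) ω - pS X (r n - l n) ω| ≤ δ * a n := by
        have := hb
        simp only [hBndef, Set.mem_setOf_eq, not_lt] at this
        exact this
      have hxy : |pS X (r n) ω / a n - pS X (r n - l n) ω / a n| ≤ δ := by
        rw [div_sub_div_same, abs_div, abs_of_pos han, div_le_iff₀ han]
        linarith
      by_cases ha : ω ∈ An
      · rw [Set.indicator_of_mem ha]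
        have h5 : |Real.exp (- f (pS X (r n) ω / a n))
            - Real.exp (- f (pS X (r n - l n) ω / a n))| ≤ ε' :=
          hδ0' _ _ (le_trans hxy hδδ0)
        linarith
      · rw [Set.indicator_of_notMem ha]
        have ha' : |pS X (r n) ω| ≤ x0 * a n := by
          have := ha
          simp only [hAndef, Set.mem_setOf_eq, not_lt] at this
          exact this
        have hx1 : |pS X (r n) ω / a n| ≤ x0 := by
          rw [abs_div, abs_of_pos han, div_le_iff₀ han]
          linarith
        have hy1 : |pS X (r n - l n) ω / a n| ≤ r0 := by
          have habs2 : |pS X (r n - l n) ω / a n|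
              ≤ |pS X (r n) ω / a n|
                + |pS X (r n) ω / a n - pS X (r n - l n) ω / a n| := by
            have := abs_sub_abs_le_abs_sub (pS X (r n - l n) ω / a n)
              (pS X (r n) ω / a n)
            rw [abs_sub_comm] at this
            linarith
          have hr02 : x0 + x0 = r0 := by rw [hx0def]; ring
          linarith
        have hfx : f (pS X (r n) ω / a n) = 0 :=
          hr0z _ (le_trans hx1 (by rw [hx0def]; linarith))
        have hfy : f (pS X (r n - l n) ω / a n) = 0 := hr0z _ hy1
        rw [hfx, hfy, sub_self, abs_zero]
        linarith
  have hintA : Integrable (An.indicator (fun _ => ε')) P :=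
    (integrable_const ε').indicator hAnm
  have hintB : Integrable (Bn.indicator (fun _ => (1:ℝ))) P :=
    (integrable_const 1).indicator hBnm
  have hInt : ∫ ω, |Real.exp (- f (pS X (r n) ω / a n))
      - Real.exp (- f (pS X (r n - l n) ω / a n))| ∂P
      ≤ ε' * (P An).toReal + (P Bn).toReal := by
    calc ∫ ω, |Real.exp (- f (pS X (r n) ω / a n))
        - Real.exp (- f (pS X (r n - l n) ω / a n))| ∂P
        ≤ ∫ ω, (An.indicator (fun _ => ε') ω + Bn.indicator (fun _ => (1:ℝ)) ω) ∂P :=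
          integral_mono_of_nonneg (Eventually.of_forall fun ω => abs_nonneg _)
            (hintA.add hintB) (Eventually.of_forall hpt)
    _ = ε' * (P An).toReal + (P Bn).toReal := by
        rw [integral_add hintA hintB, integral_indicator_const _ hAnm,
          integral_indicator_const _ hBnm, smul_eq_mul, smul_eq_mul, mul_one, mul_comm]
        rfl
  have hintnn : 0 ≤ ∫ ω, |Real.exp (- f (pS X (r n) ω / a n))
      - Real.exp (- f (pS X (r n - l n) ω / a n))| ∂P :=
    integral_nonneg fun ω => abs_nonneg _
  have hnn : 0 ≤ k n * ∫ ω, |Real.exp (- f (pS X (r n) ω / a n))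
      - Real.exp (- f (pS X (r n - l n) ω / a n))| ∂P :=
    mul_nonneg (hknn n) hintnn
  rw [Real.dist_eq, sub_zero, abs_of_nonneg hnn]
  have hεC : ε' * C = ε/2 := by
    rw [hε'def]
    field_simp
  calc k n * ∫ ω, |Real.exp (- f (pS X (r n) ω / a n))
      - Real.exp (- f (pS X (r n - l n) ω / a n))| ∂P
      ≤ k n * (ε' * (P An).toReal + (P Bn).toReal) :=
        mul_le_mul_of_nonneg_left hInt (hknn n)
  _ = ε' * (k n * (P An).toReal) + k n * (P Bn).toReal := by ring
  _ < ε' * C + ε/2 :=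
        add_lt_add (mul_lt_mul_of_pos_left hB hε'pos) hPB
  _ = ε := by rw [hεC]; ring
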